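/- Let n ≥ 1, K ≥ 1, let A_1, …, A_K ∈ ℂ^{n×n} be Hermitian matrices, and let P ≥ 0. Then the supremum of Σ_{j=1}^K w_j^* A_j w_j over all families (w_1, …, w_K) in ℂ^n with Σ_{j=1}^K ‖w_j‖² ≤ P equals P·max(0, max_j λmax(A_j)). Moreover, this supremum is attained by a family in which at most one vector w_j is nonzero: if j* maximizes λmax(A_j) and λmax(A_{j*}) > 0, take w_{j*} = √P·x with x a unit eigenvector for λmax(A_{j*}) and w_j = 0 for j ≠ j*; otherwise take all w_j = 0. -/

import Mathlib

open Matrix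

/-- The largest eigenvalue of a Hermitian matrix. -/
noncomputable def lamMax {n : ℕ} {A : Matrix (Fin n) (Fin n) ℂ}
    (hA : A.IsHermitian) : ℝ :=
  ⨆ i, hA.eigenvalues i

lemma re_dotProduct_star_self' {n : ℕ} (x : Fin n → ℂ) :
    (star x ⬝ᵥ x).re = ∑ i, ‖x i‖ ^ 2 := by
  simp only [dotProduct, Pi.star_apply, RCLike.star_def, Complex.conj_mul',
    Complex.re_sum, ← Complex.ofReal_pow, Complex.ofReal_re]

lemma quad_decomp' {n : ℕ} {A : Matrix (Fin n) (Fin n) ℂ} (hA : A.IsHermitian) (w : Fin n → ℂ) :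
    (star w ⬝ᵥ A *ᵥ w).re
      = ∑ i, hA.eigenvalues i *
          ‖((star (hA.eigenvectorUnitary : Matrix (Fin n) (Fin n) ℂ)) *ᵥ w) i‖ ^ 2 := by
  set U : Matrix (Fin n) (Fin n) ℂ := (hA.eigenvectorUnitary : Matrix (Fin n) (Fin n) ℂ)
  set v : Fin n → ℂ := star U *ᵥ w with hv
  have h1 : star w ⬝ᵥ A *ᵥ w = star v ⬝ᵥ (diagonal (RCLike.ofReal ∘ hA.eigenvalues)) *ᵥ v := by
    conv_lhs => rw [hA.spectral_theorem, Unitary.conjStarAlgAut_apply]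
    rw [← mulVec_mulVec, ← mulVec_mulVec, dotProduct_mulVec, hv, star_mulVec]
    simp only [star_eq_conjTranspose, conjTranspose_conjTranspose, dotProduct_mulVec]
    rfl
  rw [h1]
  simp only [mulVec_diagonal, dotProduct, Pi.star_apply, Function.comp_apply,
    RCLike.star_def, Complex.re_sum]
  refine Finset.sum_congr rfl fun i _ => ?_
  rw [mul_left_comm, Complex.conj_mul']
  simp [Complex.mul_re, ← Complex.ofReal_pow]

lemma pow_preserved' {n : ℕ} {A : Matrix (Fin n) (Fin n) ℂ} (hA : A.IsHermitian) (w : Fin n → ℂ) :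
    ∑ i, ‖((star (hA.eigenvectorUnitary : Matrix (Fin n) (Fin n) ℂ)) *ᵥ w) i‖ ^ 2
      = ∑ i, ‖w i‖ ^ 2 := by
  set U : Matrix (Fin n) (Fin n) ℂ := (hA.eigenvectorUnitary : Matrix (Fin n) (Fin n) ℂ)
  set v : Fin n → ℂ := star U *ᵥ w with hv
  have h1 : star v ⬝ᵥ v = star w ⬝ᵥ w := by
    rw [hv, star_mulVec, dotProduct_mulVec, vecMul_vecMul]
    simp only [star_eq_conjTranspose, conjTranspose_conjTranspose]
    have hU : U * Uᴴ = 1 := by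
      simpa [star_eq_conjTranspose] using (Matrix.mem_unitaryGroup_iff).mp hA.eigenvectorUnitary.2
    rw [hU, vecMul_one]
  rw [← re_dotProduct_star_self', ← re_dotProduct_star_self', h1]

/-- Optimality of the per-cell DBF solution: the supremum of
`Σ_j w_j^* A_j w_j` over families with total power `Σ_j ‖w_j‖² ≤ P` equals
`P · max 0 (max_j λmax (A_j))`, and it is attained by a family in which
at most one vector is nonzero. -/
theorem sup_sum_quadratic_forms (n K : ℕ) (hn : 1 ≤ n) (hK : 1 ≤ K)
    (A : Fin K → Matrix (Fin n) (Fin n) ℂ) (hA : ∀ j, (A j).IsHermitian)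
    (P : ℝ) (hP : 0 ≤ P) :
    IsGreatest {r : ℝ | ∃ w : Fin K → Fin n → ℂ,
        (∑ j, ∑ i, ‖w j i‖ ^ 2) ≤ P ∧
        r = ∑ j, (star (w j) ⬝ᵥ (A j).mulVec (w j)).re}
      (P * max 0 (⨆ j, lamMax (hA j))) ∧
    ∃ w : Fin K → Fin n → ℂ,
      (∑ j, ∑ i, ‖w j i‖ ^ 2) ≤ P ∧
      (∑ j, (star (w j) ⬝ᵥ (A j).mulVec (w j)).re)
        = P * max 0 (⨆ j, lamMax (hA j)) ∧
      ∃ j₀ : Fin K, ∀ j, j ≠ j₀ → w j = 0 := by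
  haveI : Nonempty (Fin n) := ⟨⟨0, hn⟩⟩
  haveI : Nonempty (Fin K) := ⟨⟨0, hK⟩⟩
  set L : ℝ := ⨆ j, lamMax (hA j) with hLdef
  obtain ⟨j₀, hj₀⟩ := Finite.exists_max (fun j => lamMax (hA j))
  have hLj : L = lamMax (hA j₀) := by
    rw [hLdef]
    exact le_antisymm (ciSup_le hj₀)
      (le_ciSup (f := fun j => lamMax (hA j)) (Set.Finite.bddAbove (Set.finite_range _)) j₀)
  obtain ⟨i₀, hi₀⟩ := Finite.exists_max (fun i => (hA j₀).eigenvalues i)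
  have hlam : lamMax (hA j₀) = (hA j₀).eigenvalues i₀ :=
    le_antisymm (ciSup_le hi₀)
      (le_ciSup (f := fun i => (hA j₀).eigenvalues i) (Set.Finite.bddAbove (Set.finite_range _)) i₀)
  -- every eigenvalue is ≤ max 0 L
  have hev : ∀ j (i : Fin n), (hA j).eigenvalues i ≤ max 0 L := by
    intro j i
    refine le_trans ?_ (le_max_right 0 L)
    rw [hLj, hlam]
    exact le_trans (le_ciSup (f := fun i => (hA j).eigenvalues i)
      (Set.Finite.bddAbove (Set.finite_range _)) i) (le_trans (hj₀ j) (by rw [hlam]))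
  -- Upper bound
  have hub : ∀ r ∈ {r : ℝ | ∃ w : Fin K → Fin n → ℂ,
        (∑ j, ∑ i, ‖w j i‖ ^ 2) ≤ P ∧
        r = ∑ j, (star (w j) ⬝ᵥ (A j).mulVec (w j)).re}, r ≤ P * max 0 L := by
    rintro r ⟨w, hw, rfl⟩
    have h1 : ∀ j, (star (w j) ⬝ᵥ (A j).mulVec (w j)).re ≤ max 0 L * ∑ i, ‖w j i‖ ^ 2 := by
      intro j
      rw [show (A j).mulVec (w j) = (A j) *ᵥ (w j) from rfl, quad_decomp' (hA j)]
      calc ∑ i, (hA j).eigenvalues i *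
            ‖((star ((hA j).eigenvectorUnitary : Matrix (Fin n) (Fin n) ℂ)) *ᵥ (w j)) i‖ ^ 2
          ≤ ∑ i, max 0 L *
            ‖((star ((hA j).eigenvectorUnitary : Matrix (Fin n) (Fin n) ℂ)) *ᵥ (w j)) i‖ ^ 2 := by
            refine Finset.sum_le_sum fun i _ => ?_
            exact mul_le_mul_of_nonneg_right (hev j i) (by positivity)
        _ = max 0 L * ∑ i, ‖((star ((hA j).eigenvectorUnitary : Matrix (Fin n) (Fin n) ℂ)) *ᵥ (w j)) i‖ ^ 2 := by
            rw [Finset.mul_sum]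
        _ = max 0 L * ∑ i, ‖w j i‖ ^ 2 := by rw [pow_preserved' (hA j)]
    calc ∑ j, (star (w j) ⬝ᵥ (A j).mulVec (w j)).re
        ≤ ∑ j, max 0 L * ∑ i, ‖w j i‖ ^ 2 := Finset.sum_le_sum fun j _ => h1 j
      _ = max 0 L * ∑ j, ∑ i, ‖w j i‖ ^ 2 := by rw [Finset.mul_sum]
      _ ≤ max 0 L * P := mul_le_mul_of_nonneg_left hw (le_max_left 0 L)
      _ = P * max 0 L := mul_comm _ _
  -- Attainment
  have hatt : ∃ w : Fin K → Fin n → ℂ,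
      (∑ j, ∑ i, ‖w j i‖ ^ 2) ≤ P ∧
      (∑ j, (star (w j) ⬝ᵥ (A j).mulVec (w j)).re) = P * max 0 L ∧
      ∃ j₀ : Fin K, ∀ j, j ≠ j₀ → w j = 0 := by
    rcases le_or_gt L 0 with hL0 | hL0
    · refine ⟨0, by simpa using hP, ?_, j₀, fun j _ => rfl⟩
      simp [max_eq_left hL0]
    · have hmax : max 0 L = (hA j₀).eigenvalues i₀ := by rw [max_eq_right hL0.le, hLj, hlam]
      set x : Fin n → ℂ := ⇑((hA j₀).eigenvectorBasis i₀) with hx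
      set c : ℂ := ((Real.sqrt P : ℝ) : ℂ) with hc
      set w : Fin K → Fin n → ℂ := Function.update (0 : Fin K → Fin n → ℂ) j₀ (c • x) with hwdef
      have hxnorm : ∑ i, ‖x i‖ ^ 2 = 1 := by
        have h1 : ‖(hA j₀).eigenvectorBasis i₀‖ = 1 := (hA j₀).eigenvectorBasis.orthonormal.1 i₀
        rw [EuclideanSpace.norm_eq] at h1
        have := Real.sqrt_eq_one.mp h1
        simpa using this
      have hwj₀ : w j₀ = c • x := by simp [hwdef]
      have hwother : ∀ j, j ≠ j₀ → w j = 0 := by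
        intro j hj; simp [hwdef, Function.update_of_ne hj]
      have hpow : (∑ j, ∑ i, ‖w j i‖ ^ 2) ≤ P := by
        rw [Finset.sum_eq_single j₀ (fun j _ hj => by simp [hwother j hj])
          (fun h => absurd (Finset.mem_univ j₀) h)]
        rw [hwj₀]
        have : ∀ i, ‖(c • x) i‖ ^ 2 = P * ‖x i‖ ^ 2 := by
          intro i
          simp [hc, norm_smul, mul_pow, Real.sq_sqrt hP, abs_of_nonneg (Real.sqrt_nonneg P)]
        simp_rw [this, ← Finset.mul_sum, hxnorm, mul_one]
        exact le_rfl
      have hval : (∑ j, (star (w j) ⬝ᵥ (A j).mulVec (w j)).re) = P * max 0 L := by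
        rw [Finset.sum_eq_single j₀ (fun j _ hj => by simp [hwother j hj])
          (fun h => absurd (Finset.mem_univ j₀) h)]
        rw [hwj₀]
        have key : star (c • x) ⬝ᵥ (A j₀).mulVec (c • x) = (P : ℂ) * (star x ⬝ᵥ (A j₀) *ᵥ x) := by
          rw [show (A j₀).mulVec (c • x) = (A j₀) *ᵥ (c • x) from rfl, mulVec_smul, star_smul,
            smul_dotProduct, dotProduct_smul, smul_smul, smul_eq_mul]
          congr 1
          rw [hc]
          rw [RCLike.star_def, Complex.conj_ofReal, ← Complex.ofReal_mul, Real.mul_self_sqrt hP]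
        rw [key, Complex.mul_re]
        have hre : (star x ⬝ᵥ (A j₀) *ᵥ x).re = (hA j₀).eigenvalues i₀ := by
          rw [(hA j₀).eigenvalues_eq i₀]
          rfl
        simp [hre, hmax]
      exact ⟨w, hpow, hval, j₀, hwother⟩
  obtain ⟨w, hw1, hw2, hw3⟩ := hatt
  exact ⟨⟨⟨w, hw1, hw2.symm⟩, hub⟩, w, hw1, hw2, hw3⟩
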